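/- Let C be a category with pullbacks, let L ⊣ R be an adjunction of endofunctors L, R : C → C, and let S be a class of objects of C closed under isomorphism. Then R admits precise factorizations w.r.t. S if and only if L preserves S-objects, i.e. X ∈ S implies L X ∈ S. -/
import Mathlib


open CategoryTheory CategoryTheory.Limits

universe v u

variable {C : Type u} [Category.{v} C]

/-- A morphism `s : S ⟶ R.obj R'` is `R`-precise if whenever `R h ∘ f = R g ∘ s`
there is a diagonal `d : R' ⟶ A` with `R d ∘ s = f` and `h ∘ d = g`. -/
def Precise (R : C ⥤ C) {S R' : C} (s : S ⟶ R.obj R') : Prop :=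
  ∀ {A D : C} (f : S ⟶ R.obj A) (g : R' ⟶ D) (h : A ⟶ D),
    f ≫ R.map h = s ≫ R.map g → ∃ d : R' ⟶ A, s ≫ R.map d = f ∧ d ≫ h = g

/-- `R` admits precise factorizations w.r.t. a class `S` of objects. -/
def AdmitsPreciseFact (R : C ⥤ C) (S : Set C) : Prop :=
  ∀ {X Y : C} (f : X ⟶ R.obj Y), X ∈ S →
    ∃ (Y' : C) (h : Y' ⟶ Y) (f' : X ⟶ R.obj Y'),
      Y' ∈ S ∧ Precise R f' ∧ f' ≫ R.map h = f

/-- The unit of an adjunction is always precise. -/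
lemma unit_precise (L R : C ⥤ C) (adj : L ⊣ R) (X : C) :
    Precise R (adj.unit.app X) := by
  intro A D f g h heq
  refine ⟨(adj.homEquiv X A).symm f, ?_, ?_⟩
  · have := adj.homEquiv_unit X A ((adj.homEquiv X A).symm f)
    simpa using this.symm
  · have h1 : (adj.homEquiv X D).symm (f ≫ R.map h) = (adj.homEquiv X A).symm f ≫ h :=
      adj.homEquiv_naturality_right_symm f h
    have h2 : (adj.homEquiv X D).symm (adj.unit.app X ≫ R.map g) = g := by
      have : adj.homEquiv X D g = adj.unit.app X ≫ R.map g := adj.homEquiv_unit X D g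
      rw [← this]; simp
    rw [heq, h2] at h1
    exact h1.symm

/-- For an adjunction `L ⊣ R` of endofunctors on a category with pullbacks,
`R` admits precise factorizations w.r.t. `S` iff `L` preserves `S`-objects. -/
theorem rightAdjoint_admitsPreciseFact_iff [HasPullbacks C]
    (L R : C ⥤ C) (adj : L ⊣ R) (S : Set C)
    (hiso : ∀ {X Y : C}, X ∈ S → (X ≅ Y) → Y ∈ S) :
    AdmitsPreciseFact R S ↔ ∀ X ∈ S, L.obj X ∈ S := by
  constructor
  · intro hadm X hX
    obtain ⟨Y', h, f', hY', hprec, hfac⟩ := hadm (adj.unit.app X) hX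
    set k : L.obj X ⟶ Y' := (adj.homEquiv X Y').symm f' with hk
    have hunit : adj.unit.app X ≫ R.map k = f' := by
      have := adj.homEquiv_unit X Y' k
      rw [hk] at this ⊢
      simpa using this.symm
    have hkh : k ≫ h = 𝟙 (L.obj X) := by
      apply (adj.homEquiv X (L.obj X)).injective
      have h2 : adj.homEquiv X (L.obj X) (k ≫ h) = adj.unit.app X := by
        rw [adj.homEquiv_unit, R.map_comp, ← Category.assoc, hunit, hfac]
      have h3 : adj.homEquiv X (L.obj X) (𝟙 _) = adj.unit.app X := by
        rw [adj.homEquiv_unit]; simp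
      rw [h2, h3]
    -- use precision to get a section of h ≫ k
    obtain ⟨d, hd1, hd2⟩ := hprec f' (𝟙 Y') (h ≫ k) (by
      rw [R.map_comp, ← Category.assoc, hfac, hunit]
      simp)
    have hdsec : d ≫ (h ≫ k) = 𝟙 Y' := by simpa using hd2
    have hepi : Epi (h ≫ k) := ⟨fun {Z} u v huv => by
      have := congrArg (fun w => d ≫ w) huv
      simpa [← Category.assoc, hdsec] using this⟩
    have hidem : (h ≫ k) ≫ (h ≫ k) = (h ≫ k) ≫ 𝟙 Y' := by
      rw [Category.comp_id, Category.assoc, ← Category.assoc k h, hkh]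
      simp
    have hhk : h ≫ k = 𝟙 Y' := hepi.left_cancellation _ _ hidem
    exact hiso hY' ⟨h, k, hhk, hkh⟩
  · intro hL X Y f hX
    exact ⟨L.obj X, (adj.homEquiv X Y).symm f, adj.unit.app X, hL X hX,
      unit_precise L R adj X, by
        have := adj.homEquiv_unit X Y ((adj.homEquiv X Y).symm f)
        simpa using this.symm⟩
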